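/- For the DoD-stabilized scheme with η = 1 − α/λ, one time step applied to piecewise constant data equals the L² projection onto piecewise constants of the exactly advected solution; consequently the scheme is exact on cell k1: u^{n+1}_{k1} equals the exact cell average over k1 of u^n(· − βΔt). -/

import Mathlib

open intervalIntegral

open MeasureTheory in
lemma integ_const_Ico' (f : ℝ → ℝ) (c a b : ℝ) (hab : a ≤ b)
    (hf : ∀ y ∈ Set.Ico a b, f y = c) :
    ∫ y in a..b, f y = c * (b - a) := by
  have hb : ∀ᵐ x : ℝ, x ≠ b := by
    refine ae_iff.mpr ?_
    simp
  have h1 : (∫ y in a..b, f y) = ∫ _ in a..b, c := by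
    apply intervalIntegral.integral_congr_ae
    filter_upwards [hb] with x hx hmem
    rw [Set.uIoc_of_le hab] at hmem
    exact hf x ⟨hmem.1.le, lt_of_le_of_ne hmem.2 hx⟩
  rw [h1, intervalIntegral.integral_const, smul_eq_mul]; ring

open MeasureTheory in
lemma intInt_of_Ico' (f : ℝ → ℝ) (c a b : ℝ) (hab : a ≤ b)
    (hf : ∀ y ∈ Set.Ico a b, f y = c) :
    IntervalIntegrable f volume a b := by
  rw [intervalIntegrable_iff_integrableOn_Ioc_of_le hab]
  have hb : ∀ᵐ x : ℝ, x ≠ b := by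
    refine ae_iff.mpr ?_
    simp
  refine (IntegrableOn.congr_fun_ae (f := fun _ : ℝ => c)
    (integrableOn_const measure_Ioc_lt_top.ne) ?_)
  filter_upwards [ae_restrict_mem measurableSet_Ioc, ae_restrict_of_ae hb] with x hmem hx
  exact (hf x ⟨hmem.1.le, lt_of_le_of_ne hmem.2 hx⟩).symm

lemma integ_two' (f : ℝ → ℝ) (c1 c2 a m b : ℝ) (h1 : a ≤ m) (h2 : m ≤ b)
    (hf1 : ∀ y ∈ Set.Ico a m, f y = c1) (hf2 : ∀ y ∈ Set.Ico m b, f y = c2) :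
    ∫ y in a..b, f y = c1 * (m - a) + c2 * (b - m) := by
  rw [← intervalIntegral.integral_add_adjacent_intervals
      (intInt_of_Ico' f c1 a m h1 hf1) (intInt_of_Ico' f c2 m b h2 hf2),
    integ_const_Ico' f c1 a m h1 hf1, integ_const_Ico' f c2 m b h2 hf2]

lemma integ_three' (f : ℝ → ℝ) (c1 c2 c3 a m1 m2 b : ℝ)
    (h1 : a ≤ m1) (h2 : m1 ≤ m2) (h3 : m2 ≤ b)
    (hf1 : ∀ y ∈ Set.Ico a m1, f y = c1) (hf2 : ∀ y ∈ Set.Ico m1 m2, f y = c2)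
    (hf3 : ∀ y ∈ Set.Ico m2 b, f y = c3) :
    ∫ y in a..b, f y = c1 * (m1 - a) + c2 * (m2 - m1) + c3 * (b - m2) := by
  have hi2 := intInt_of_Ico' f c2 m1 m2 h2 hf2
  have hi3 := intInt_of_Ico' f c3 m2 b h3 hf3
  rw [← intervalIntegral.integral_add_adjacent_intervals
      (intInt_of_Ico' f c1 a m1 h1 hf1) (hi2.trans hi3),
    integ_const_Ico' f c1 a m1 h1 hf1, integ_two' f c2 c3 m1 m2 b h2 h3 hf2 hf3]
  ring

/-- Generic update on a regular cell `[a, a+h)` whose left neighbor is `[a-h, a)`. -/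
lemma generic_step' (f : ℝ → ℝ) (vm vc ww a h lam : ℝ)
    (hh : 0 < h) (hlam0 : 0 < lam) (hlam1 : lam ≤ 1)
    (hfm : ∀ y ∈ Set.Ico (a - h) a, f y = vm)
    (hfc : ∀ y ∈ Set.Ico a (a + h), f y = vc)
    (hw : ww = vc - lam * (vc - vm)) :
    ww = (1 / ((a + h) - a)) * ∫ y in a..(a + h), f (y - lam * h) := by
  rw [intervalIntegral.integral_comp_sub_right f (lam * h),
    integ_two' f vm vc (a - lam * h) a (a + h - lam * h)
      (by nlinarith) (by nlinarith)
      (fun y hy => hfm y ⟨by nlinarith [hy.1], hy.2⟩)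
      (fun y hy => hfc y ⟨hy.1, by nlinarith [hy.2]⟩), hw]
  have hne : h ≠ 0 := ne_of_gt hh
  rw [show a + h - a = h by ring]
  field_simp
  ring

set_option maxHeartbeats 1000000 in
/-- With `η = 1 − α/λ`, one DoD step applied to piecewise constant data equals the L²
projection (cell averaging) of the exactly advected solution `f(· − λh)` on every cell
of the cut cell mesh; in particular the scheme is exact on the small cell `k1` (cell 0).
Cells are indexed by `ℤ` with left endpoints `L`: cell 0 is `k1 = [0, αh]`,
cell 1 is `k2 = [αh, h]`, and all other cells have length `h`. -/
theorem dod_equals_projection_of_advected (h α lam η : ℝ)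
    (L : ℤ → ℝ) (v w : ℤ → ℝ) (f : ℝ → ℝ)
    (hh : 0 < h) (hα0 : 0 < α) (hcut : α < lam) (hlam : lam ≤ 1/2)
    (hη : η = 1 - α / lam)
    (hL : ∀ j : ℤ, L j = if j ≤ 0 then (j : ℝ) * h
      else if j = 1 then α * h else ((j : ℝ) - 1) * h)
    (hf : ∀ j : ℤ, ∀ y ∈ Set.Ico (L j) (L (j + 1)), f y = v j)
    (hstd : ∀ j : ℤ, j ≠ 0 → j ≠ 1 → w j = v j - lam * (v j - v (j - 1)))
    (hk1 : w 0 = v 0 - (lam / α) * (1 - η) * (v 0 - v (-1)))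
    (hk2 : w 1 = v 1 - (lam / (1 - α)) * (v 1 - v 0)
        - (lam / (1 - α)) * η * (v 0 - v (-1))) :
    ∀ j : ℤ, w j = (1 / (L (j + 1) - L j)) * ∫ y in (L j)..(L (j + 1)), f (y - lam * h) := by
  intro j
  have hlam0 : 0 < lam := hα0.trans hcut
  have hα1 : α < 1/2 := hcut.trans_le hlam
  have key : ∀ a b : ℝ, (∫ y in a..b, f (y - lam * h)) =
      ∫ y in (a - lam * h)..(b - lam * h), f y := fun a b =>
    intervalIntegral.integral_comp_sub_right f (lam * h)
  have hLm1 : L (-1) = -h := by rw [hL]; norm_num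
  have hL0 : L 0 = 0 := by rw [hL]; norm_num
  have hL1 : L 1 = α * h := by rw [hL]; norm_num
  have hL2 : L 2 = h := by rw [hL]; norm_num
  have hL3 : L 3 = 2 * h := by rw [hL]; norm_num
  have cellm1 : ∀ y ∈ Set.Ico (-h) 0, f y = v (-1) := by
    have := hf (-1)
    rwa [show (-1 : ℤ) + 1 = 0 by norm_num, hLm1, hL0] at this
  have cell0 : ∀ y ∈ Set.Ico (0:ℝ) (α * h), f y = v 0 := by
    have := hf 0
    rwa [show (0 : ℤ) + 1 = 1 by norm_num, hL0, hL1] at this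
  have cell1 : ∀ y ∈ Set.Ico (α * h) h, f y = v 1 := by
    have := hf 1
    rwa [show (1 : ℤ) + 1 = 2 by norm_num, hL1, hL2] at this
  have cell2 : ∀ y ∈ Set.Ico h (2 * h), f y = v 2 := by
    have := hf 2
    rwa [show (2 : ℤ) + 1 = 3 by norm_num, hL2, hL3] at this
  rcases eq_or_ne j 0 with rfl | hj0
  · -- small cell k1 : [0, αh], fully advected into cell -1
    rw [show (0 : ℤ) + 1 = 1 by norm_num, hL0, hL1, key,
      integ_const_Ico' f (v (-1)) (0 - lam * h) (α * h - lam * h) (by nlinarith)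
        (fun y hy => cellm1 y ⟨by nlinarith [hy.1], by nlinarith [hy.2]⟩),
      hk1, hη]
    have hα : α ≠ 0 := ne_of_gt hα0
    have hl : lam ≠ 0 := ne_of_gt hlam0
    have hne : h ≠ 0 := ne_of_gt hh
    rw [show α * h - 0 = α * h by ring]
    field_simp
    try ring
  rcases eq_or_ne j 1 with rfl | hj1
  · -- cell k2 : [αh, h]
    rw [show (1 : ℤ) + 1 = 2 by norm_num, hL1, hL2, key,
      integ_three' f (v (-1)) (v 0) (v 1) (α * h - lam * h) 0 (α * h) (h - lam * h)
        (by nlinarith) (by nlinarith) (by nlinarith)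
        (fun y hy => cellm1 y ⟨by nlinarith [hy.1], hy.2⟩)
        cell0
        (fun y hy => cell1 y ⟨hy.1, by nlinarith [hy.2]⟩),
      hk2, hη]
    have h1α : (1 : ℝ) - α ≠ 0 := by intro hc; nlinarith
    have hl : lam ≠ 0 := ne_of_gt hlam0
    have hne : h ≠ 0 := ne_of_gt hh
    rw [show h - α * h = (1 - α) * h by ring]
    field_simp
    ring
  rcases eq_or_ne j 2 with rfl | hj2
  · -- cell 2 : [h, 2h], left neighbor is the cut cell k2 = [αh, h]
    rw [show (2 : ℤ) + 1 = 3 by norm_num, hL2, hL3, key,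
      integ_two' f (v 1) (v 2) (h - lam * h) h (2 * h - lam * h)
        (by nlinarith) (by nlinarith)
        (fun y hy => cell1 y ⟨by nlinarith [hy.1], hy.2⟩)
        (fun y hy => cell2 y ⟨hy.1, by nlinarith [hy.2]⟩),
      hstd 2 (by norm_num) (by norm_num)]
    have hne : h ≠ 0 := ne_of_gt hh
    rw [show (2:ℤ) - 1 = 1 by norm_num, show 2 * h - h = h by ring]
    field_simp
    ring
  rcases lt_or_ge j 0 with hjneg | hjpos
  · -- j ≤ -1 : all cells uniform
    have hLj : L j = (j : ℝ) * h := by rw [hL, if_pos (by omega)]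
    have hLj1 : L (j + 1) = (j : ℝ) * h + h := by
      rw [hL, if_pos (by omega : j + 1 ≤ 0)]; push_cast; ring
    have hLjm : L (j - 1) = (j : ℝ) * h - h := by
      rw [hL, if_pos (by omega : j - 1 ≤ 0)]; push_cast; ring
    have hm : ∀ y ∈ Set.Ico ((j : ℝ) * h - h) ((j : ℝ) * h), f y = v (j - 1) := by
      have := hf (j - 1)
      rwa [show j - 1 + 1 = j by ring, hLjm, hLj] at this
    have hc : ∀ y ∈ Set.Ico ((j : ℝ) * h) ((j : ℝ) * h + h), f y = v j := by
      have := hf j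
      rwa [hLj, hLj1] at this
    rw [hLj, hLj1]
    exact generic_step' f (v (j - 1)) (v j) (w j) ((j : ℝ) * h) h lam hh hlam0
      (by linarith) hm hc (hstd j hj0 hj1)
  · -- j ≥ 3 : all cells uniform
    have hj3 : 3 ≤ j := by omega
    have hLj : L j = ((j : ℝ) - 1) * h := by
      rw [hL, if_neg (by omega), if_neg (by omega)]
    have hLj1 : L (j + 1) = ((j : ℝ) - 1) * h + h := by
      rw [hL, if_neg (by omega), if_neg (by omega)]; push_cast; ring
    have hLjm : L (j - 1) = ((j : ℝ) - 1) * h - h := by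
      rw [hL, if_neg (by omega), if_neg (by omega)]; push_cast; ring
    have hm : ∀ y ∈ Set.Ico (((j : ℝ) - 1) * h - h) (((j : ℝ) - 1) * h), f y = v (j - 1) := by
      have := hf (j - 1)
      rwa [show j - 1 + 1 = j by ring, hLjm, hLj] at this
    have hc : ∀ y ∈ Set.Ico (((j : ℝ) - 1) * h) (((j : ℝ) - 1) * h + h), f y = v j := by
      have := hf j
      rwa [hLj, hLj1] at this
    rw [hLj, hLj1]
    exact generic_step' f (v (j - 1)) (v j) (w j) (((j : ℝ) - 1) * h) h lam hh hlam0
      (by linarith) hm hc (hstd j hj0 hj1)
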